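/- Let f ∈ F_d^cm be completely monotone with f(r) = ∫_0^∞ e^{-rt} ρ_f(t) dt where ρ_f ≥ 0 is increasing on (0,∞). Let K ⊂ N \ {1}, a_k ≥ 0 for k ∈ K with Σ_{k∈K} a_k/k² ≤ 1. Then f_κ(r) := f(r) − Σ_{k∈K} a_k f(k² r) is completely monotone on (0,∞). -/

import Mathlib

open MeasureTheory Set Filter Topology
open scoped NNReal

/-- A function is completely monotone on `(0,∞)` if `(-1)^n g^{(n)}(r) ≥ 0`
for all `n ∈ ℕ` and all `r > 0`. -/
def CompletelyMonotoneOn (g : ℝ → ℝ) : Prop :=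
  ∀ (n : ℕ) (r : ℝ), 0 < r → 0 ≤ (-1 : ℝ) ^ n * iteratedDeriv n g r

lemma cm_pow_mul_exp_neg_le {n : ℕ} {r t : ℝ} (hr : 0 < r) (ht : 0 ≤ t) :
    t ^ n * Real.exp (-(r * t)) ≤
      (n.factorial : ℝ) / (r / 2) ^ n * Real.exp (-(r / 2 * t)) := by
  set s := r / 2 with hs
  have hs0 : 0 < s := by positivity
  have h1 : (s * t) ^ n ≤ (n.factorial : ℝ) * Real.exp (s * t) := by
    have h2 : (s * t) ^ n / (n.factorial : ℝ) ≤ Real.exp (s * t) := by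
      calc (s * t) ^ n / (n.factorial : ℝ)
          ≤ ∑ i ∈ Finset.range (n + 1), (s * t) ^ i / (i.factorial : ℝ) :=
            Finset.single_le_sum (f := fun i => (s * t) ^ i / (i.factorial : ℝ))
              (fun i _ => by positivity) (Finset.self_mem_range_succ n)
        _ ≤ Real.exp (s * t) := Real.sum_le_exp_of_nonneg (by positivity) _
    rw [div_le_iff₀ (by positivity)] at h2
    linarith [h2]
  have htn : t ^ n ≤ (n.factorial : ℝ) / s ^ n * Real.exp (s * t) := by
    rw [div_mul_eq_mul_div, le_div_iff₀ (by positivity)]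
    calc t ^ n * s ^ n = (s * t) ^ n := by rw [mul_pow]; ring
      _ ≤ (n.factorial : ℝ) * Real.exp (s * t) := h1
  calc t ^ n * Real.exp (-(r * t))
      ≤ ((n.factorial : ℝ) / s ^ n * Real.exp (s * t)) * Real.exp (-(r * t)) :=
        mul_le_mul_of_nonneg_right htn (Real.exp_pos _).le
    _ = (n.factorial : ℝ) / s ^ n * Real.exp (-(s * t)) := by
        rw [mul_assoc, ← Real.exp_add]
        congr 1
        rw [hs]; ring

lemma laplace_completelyMonotone (μf : ℝ → ℝ)
    (hmeas : AEStronglyMeasurable μf (volume.restrict (Ioi 0)))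
    (hpos : ∀ t ∈ Ioi (0 : ℝ), 0 ≤ μf t)
    (hi : ∀ r > (0 : ℝ), IntegrableOn (fun t => Real.exp (-(r * t)) * μf t) (Ioi 0)) :
    CompletelyMonotoneOn (fun r => ∫ t in Ioi (0 : ℝ), Real.exp (-(r * t)) * μf t) := by
  set Ln : ℕ → ℝ → ℝ :=
    fun n r => ∫ t in Ioi (0 : ℝ), (-t) ^ n * (Real.exp (-(r * t)) * μf t) with hLn
  have hnorm : ∀ r > (0 : ℝ),
      IntegrableOn (fun t => Real.exp (-(r * t)) * ‖μf t‖) (Ioi 0) := by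
    intro r hr
    simpa [IntegrableOn, Real.norm_eq_abs, abs_mul, abs_of_pos (Real.exp_pos _)] using (hi r hr).norm
  have hmeas2 : ∀ (n : ℕ) (r : ℝ),
      AEStronglyMeasurable (fun t => |t| ^ n * (Real.exp (-(r * t)) * ‖μf t‖))
        (volume.restrict (Ioi 0)) := by
    intro n r
    exact ((continuous_abs.pow n).aestronglyMeasurable).mul
      (((Real.continuous_exp.comp (continuous_const.mul continuous_id).neg).aestronglyMeasurable).mul
        hmeas.norm)
  have haux : ∀ (n : ℕ) (r : ℝ), 0 < r →
      IntegrableOn (fun t => |t| ^ n * (Real.exp (-(r * t)) * ‖μf t‖)) (Ioi 0) := by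
    intro n r hr
    have hbd := (hnorm (r / 2) (by positivity)).const_mul ((n.factorial : ℝ) / (r / 2) ^ n)
    refine Integrable.mono' hbd (hmeas2 n r) ?_
    filter_upwards [ae_restrict_mem measurableSet_Ioi] with t ht
    have ht0 : (0 : ℝ) < t := ht
    have h1 : ‖|t| ^ n * (Real.exp (-(r * t)) * ‖μf t‖)‖
        = t ^ n * Real.exp (-(r * t)) * ‖μf t‖ := by
      rw [Real.norm_eq_abs, abs_of_nonneg (by positivity), abs_of_pos ht0, mul_assoc]
    rw [h1]
    calc t ^ n * Real.exp (-(r * t)) * ‖μf t‖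
        ≤ ((n.factorial : ℝ) / (r / 2) ^ n * Real.exp (-(r / 2 * t))) * ‖μf t‖ :=
          mul_le_mul_of_nonneg_right (cm_pow_mul_exp_neg_le hr ht0.le) (norm_nonneg _)
      _ = (n.factorial : ℝ) / (r / 2) ^ n * (Real.exp (-(r / 2 * t)) * ‖μf t‖) := by ring
  have hmeas3 : ∀ (n : ℕ) (r : ℝ),
      AEStronglyMeasurable (fun t => (-t) ^ n * (Real.exp (-(r * t)) * μf t))
        (volume.restrict (Ioi 0)) := by
    intro n r
    exact ((continuous_neg.pow n).aestronglyMeasurable).mul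
      (((Real.continuous_exp.comp (continuous_const.mul continuous_id).neg).aestronglyMeasurable).mul
        hmeas)
  have hInt : ∀ (n : ℕ) (r : ℝ), 0 < r →
      IntegrableOn (fun t => (-t) ^ n * (Real.exp (-(r * t)) * μf t)) (Ioi 0) := by
    intro n r hr
    refine Integrable.mono' (haux n r hr) (hmeas3 n r) ?_
    filter_upwards with t
    rw [Real.norm_eq_abs, abs_mul, abs_pow, abs_neg, abs_mul,
      abs_of_pos (Real.exp_pos _), Real.norm_eq_abs]
  have hDeriv : ∀ (n : ℕ) (r : ℝ), 0 < r → HasDerivAt (Ln n) (Ln (n + 1) r) r := by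
    intro n r hr
    have key := hasDerivAt_integral_of_dominated_loc_of_deriv_le
      (μ := volume.restrict (Ioi 0)) (x₀ := r)
      (F := fun x t => (-t) ^ n * (Real.exp (-(x * t)) * μf t))
      (F' := fun x t => (-t) ^ (n + 1) * (Real.exp (-(x * t)) * μf t))
      (bound := fun t => |t| ^ (n + 1) * (Real.exp (-(r / 2 * t)) * ‖μf t‖))
      (s := Metric.ball r (r / 2)) (Metric.ball_mem_nhds r (by positivity))
      (Eventually.of_forall fun x => hmeas3 n x)
      (hInt n r hr)
      (hmeas3 (n + 1) r)
      ?_ (haux (n + 1) (r / 2) (by positivity)) ?_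
    · exact key.2
    · filter_upwards [ae_restrict_mem measurableSet_Ioi] with t ht x hx
      have ht0 : (0 : ℝ) < t := ht
      have hx2 : r / 2 < x := by
        rw [Real.ball_eq_Ioo] at hx
        linarith [hx.1]
      have h1 : ‖(-t) ^ (n + 1) * (Real.exp (-(x * t)) * μf t)‖
          = |t| ^ (n + 1) * (Real.exp (-(x * t)) * ‖μf t‖) := by
        rw [Real.norm_eq_abs, abs_mul, abs_pow, abs_neg, abs_mul,
          abs_of_pos (Real.exp_pos _), Real.norm_eq_abs]
      rw [h1]
      have h2 : Real.exp (-(x * t)) ≤ Real.exp (-(r / 2 * t)) := by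
        apply Real.exp_le_exp.2
        nlinarith
      have h3 : Real.exp (-(x * t)) * ‖μf t‖ ≤ Real.exp (-(r / 2 * t)) * ‖μf t‖ :=
        mul_le_mul_of_nonneg_right h2 (norm_nonneg _)
      exact mul_le_mul_of_nonneg_left h3 (by positivity)
    · filter_upwards with t x _
      have h1 : HasDerivAt (fun x : ℝ => Real.exp (-(x * t)))
          (Real.exp (-(x * t)) * (-t)) x := by
        have h0 : HasDerivAt (fun x : ℝ => -(x * t)) (-t) x := by
          exact (hasDerivAt_mul_const t).neg
        exact h0.exp
      have h2 := ((h1.mul_const (μf t)).const_mul ((-t) ^ n))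
      convert h2 using 1
      · rfl
      ring
  have hIter : ∀ (n : ℕ) (r : ℝ), 0 < r → iteratedDeriv n (Ln 0) r = Ln n r := by
    intro n
    induction n with
    | zero => intro r _; simp [iteratedDeriv_zero]
    | succ n ih =>
      intro r hr
      rw [iteratedDeriv_succ]
      have heq : iteratedDeriv n (Ln 0) =ᶠ[𝓝 r] Ln n := by
        filter_upwards [Ioi_mem_nhds hr] with x hx
        exact ih x hx
      rw [heq.deriv_eq]
      exact (hDeriv n r hr).deriv
  intro n r hr
  have h0 : (fun r => ∫ t in Ioi (0 : ℝ), Real.exp (-(r * t)) * μf t) = Ln 0 := by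
    funext x
    simp [hLn]
  rw [h0, hIter n r hr]
  show 0 ≤ (-1 : ℝ) ^ n * ∫ t in Ioi (0 : ℝ), (-t) ^ n * (Real.exp (-(r * t)) * μf t)
  rw [← integral_const_mul]
  refine setIntegral_nonneg measurableSet_Ioi fun t ht => ?_
  have ht0 : (0 : ℝ) < t := ht
  have h1 : (-1 : ℝ) ^ n * ((-t) ^ n * (Real.exp (-(r * t)) * μf t))
      = t ^ n * (Real.exp (-(r * t)) * μf t) := by
    rw [← mul_assoc, ← mul_pow]
    norm_num
  rw [h1]
  have := hpos t ht
  positivity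

lemma cm_ae_comp_div {ρ g : ℝ → ℝ} (h : ρ =ᵐ[volume.restrict (Ioi 0)] g) {c : ℝ} (hc : 0 < c) :
    (fun t => ρ (t / c)) =ᵐ[volume.restrict (Ioi 0)] (fun t => g (t / c)) := by
  rw [EventuallyEq, ae_iff] at h ⊢
  rw [Measure.restrict_apply' measurableSet_Ioi] at h ⊢
  have hsub : {t | ¬ ρ (t / c) = g (t / c)} ∩ Ioi 0
      ⊆ (fun t : ℝ => c⁻¹ * t) ⁻¹' ({t | ¬ ρ t = g t} ∩ Ioi 0) := by
    rintro t ⟨ht1, ht2⟩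
    have ht0 : (0 : ℝ) < t := ht2
    constructor
    · show ¬ ρ (c⁻¹ * t) = g (c⁻¹ * t)
      rw [mul_comm, ← div_eq_mul_inv]
      exact ht1
    · show (0 : ℝ) < c⁻¹ * t
      positivity
  refine measure_mono_null hsub ?_
  have := Real.volume_preimage_mul_left (inv_ne_zero hc.ne') ({t | ¬ ρ t = g t} ∩ Ioi 0)
  rw [this, h, mul_zero]

theorem completelyMonotone_defect_of_increasing_density (ρ : ℝ → ℝ)
    (hρ0 : ∀ t : ℝ, 0 ≤ ρ t) (hρmono : MonotoneOn ρ (Set.Ioi 0))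
    (hint : ∀ r > (0 : ℝ), IntegrableOn (fun t => Real.exp (-(r * t)) * ρ t) (Set.Ioi 0))
    (f : ℝ → ℝ) (hcm : CompletelyMonotoneOn f)
    (hf : ∀ r > (0 : ℝ), f r = ∫ t in Set.Ioi (0 : ℝ), Real.exp (-(r * t)) * ρ t)
    (K : Set ℕ) (hK : ∀ k ∈ K, 2 ≤ k) (a : ℕ → ℝ) (ha : ∀ k ∈ K, 0 ≤ a k)
    (hsum : Summable fun k : K => a k / (k : ℝ) ^ 2)
    (hle : (∑' k : K, a k / (k : ℝ) ^ 2) ≤ 1) :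
    CompletelyMonotoneOn (fun r => f r - ∑' k : K, a k * f ((k : ℝ) ^ 2 * r)) := by
  classical
  have hc4 : ∀ k : K, (4 : ℝ) ≤ ((k : ℕ) : ℝ) ^ 2 := by
    intro k
    have h2 : (2 : ℝ) ≤ ((k : ℕ) : ℝ) := by exact_mod_cast hK k k.2
    nlinarith
  have hc0 : ∀ k : K, (0 : ℝ) < ((k : ℕ) : ℝ) ^ 2 := fun k => lt_of_lt_of_le (by norm_num) (hc4 k)
  have ha' : ∀ k : K, 0 ≤ a k := fun k => ha k k.2
  -- measurable version of ρ
  have hρae : AEMeasurable ρ (volume.restrict (Ioi 0)) :=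
    aemeasurable_restrict_of_monotoneOn measurableSet_Ioi hρmono
  set g : ℝ → ℝ := fun t => max (hρae.mk ρ t) 0 with hgdef
  have hgmeas : Measurable g := hρae.measurable_mk.max measurable_const
  have hg : ρ =ᵐ[volume.restrict (Ioi 0)] g := by
    filter_upwards [hρae.ae_eq_mk] with t ht
    rw [hgdef]
    simp only [← ht]
    rw [max_eq_left (hρ0 t)]
  -- pointwise facts on `Ioi 0`
  have hterm_le : ∀ t ∈ Ioi (0 : ℝ), ∀ k : K, ρ (t / ((k : ℕ) : ℝ) ^ 2) ≤ ρ t := by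
    intro t ht k
    have ht0 : (0 : ℝ) < t := ht
    have h1 : t / ((k : ℕ) : ℝ) ^ 2 ∈ Ioi (0 : ℝ) := by
      have := hc0 k; exact mem_Ioi.2 (by positivity)
    exact hρmono h1 ht (div_le_self ht0.le (by linarith [hc4 k]))
  have hsummT : ∀ t ∈ Ioi (0 : ℝ),
      Summable (fun k : K => a k / ((k : ℕ) : ℝ) ^ 2 * ρ (t / ((k : ℕ) : ℝ) ^ 2)) := by
    intro t ht
    refine Summable.of_nonneg_of_le (fun k => ?_) (fun k => ?_) (hsum.mul_right (ρ t))
    · have := hc0 k; have := ha' k; have := hρ0 (t / ((k : ℕ) : ℝ) ^ 2); positivity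
    · refine mul_le_mul_of_nonneg_left (hterm_le t ht k) ?_
      have := hc0 k; have := ha' k; positivity
  have htsum_le : ∀ t ∈ Ioi (0 : ℝ),
      (∑' k : K, a k / ((k : ℕ) : ℝ) ^ 2 * ρ (t / ((k : ℕ) : ℝ) ^ 2)) ≤ ρ t := by
    intro t ht
    calc (∑' k : K, a k / ((k : ℕ) : ℝ) ^ 2 * ρ (t / ((k : ℕ) : ℝ) ^ 2))
        ≤ ∑' k : K, a k / ((k : ℕ) : ℝ) ^ 2 * ρ t := by
          refine Summable.tsum_le_tsum (fun k => ?_) (hsummT t ht) (hsum.mul_right (ρ t))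
          refine mul_le_mul_of_nonneg_left (hterm_le t ht k) ?_
          have := hc0 k; have := ha' k; positivity
      _ = (∑' k : K, a k / ((k : ℕ) : ℝ) ^ 2) * ρ t := tsum_mul_right
      _ ≤ 1 * ρ t := mul_le_mul_of_nonneg_right hle (hρ0 t)
      _ = ρ t := one_mul _
  set μκ : ℝ → ℝ :=
    fun t => ρ t - ∑' k : K, a k / ((k : ℕ) : ℝ) ^ 2 * ρ (t / ((k : ℕ) : ℝ) ^ 2) with hμκ
  have hμκ0 : ∀ t ∈ Ioi (0 : ℝ), 0 ≤ μκ t := fun t ht => sub_nonneg.2 (htsum_le t ht)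
  have hμκ_le : ∀ t : ℝ, μκ t ≤ ρ t := by
    intro t
    have h1 : 0 ≤ ∑' k : K, a k / ((k : ℕ) : ℝ) ^ 2 * ρ (t / ((k : ℕ) : ℝ) ^ 2) :=
      tsum_nonneg fun k => by
        have := hc0 k; have := ha' k; have := hρ0 (t / ((k : ℕ) : ℝ) ^ 2); positivity
    simp only [hμκ]; linarith
  -- measurability of μκ
  have hall : ∀ᵐ t ∂(volume.restrict (Ioi 0)), ∀ k : K,
      ρ (t / ((k : ℕ) : ℝ) ^ 2) = g (t / ((k : ℕ) : ℝ) ^ 2) :=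
    (ae_all_iff).2 fun k => cm_ae_comp_div hg (hc0 k)
  set Gm : ℝ → ℝ := fun t =>
    ((∑' k : K, Real.toNNReal (a k / ((k : ℕ) : ℝ) ^ 2 * g (t / ((k : ℕ) : ℝ) ^ 2)) : ℝ≥0) : ℝ)
    with hGmdef
  have hGm_meas : Measurable Gm := by
    apply Measurable.coe_nnreal_real
    apply Measurable.nnreal_tsum
    intro k
    exact ((hgmeas.comp (measurable_id.div_const _)).const_mul _).real_toNNReal
  have hμκ_ae : μκ =ᵐ[volume.restrict (Ioi 0)] (fun t => g t - Gm t) := by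
    filter_upwards [hall, hg] with t hteq htg
    have h1 : Gm t = ∑' k : K, a k / ((k : ℕ) : ℝ) ^ 2 * ρ (t / ((k : ℕ) : ℝ) ^ 2) := by
      simp only [hGmdef]
      rw [NNReal.coe_tsum]
      refine tsum_congr fun k => ?_
      rw [← hteq k]
      refine Real.coe_toNNReal _ ?_
      have := hc0 k; have := ha' k; have := hρ0 (t / ((k : ℕ) : ℝ) ^ 2); positivity
    simp only [hμκ, h1, htg]
  have hμκ_meas : AEStronglyMeasurable μκ (volume.restrict (Ioi 0)) :=
    ((hgmeas.sub hGm_meas).aemeasurable.congr hμκ_ae.symm).aestronglyMeasurable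
  -- integrability of the kernel against μκ
  have hiκ : ∀ r > (0 : ℝ), IntegrableOn (fun t => Real.exp (-(r * t)) * μκ t) (Ioi 0) := by
    intro r hr
    refine Integrable.mono' (hint r hr) ?_ ?_
    · exact ((Real.continuous_exp.comp
        (continuous_const.mul continuous_id).neg).aestronglyMeasurable).mul hμκ_meas
    · filter_upwards [ae_restrict_mem measurableSet_Ioi] with t ht
      have h0 := hμκ0 t ht
      have h1 := hμκ_le t
      rw [Real.norm_eq_abs, abs_mul, abs_of_pos (Real.exp_pos _), abs_of_nonneg h0]
      exact mul_le_mul_of_nonneg_left h1 (Real.exp_pos _).le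
  have hCM := laplace_completelyMonotone μκ hμκ_meas hμκ0 hiκ
  -- identification of the two functions on `Ioi 0`
  have hTeq : ∀ r > (0 : ℝ),
      f r - (∑' k : K, a k * f (((k : ℕ) : ℝ) ^ 2 * r))
        = ∫ t in Ioi (0 : ℝ), Real.exp (-(r * t)) * μκ t := by
    intro r hr
    set Fr : K → ℝ → ℝ := fun k t =>
      a k / ((k : ℕ) : ℝ) ^ 2 * (Real.exp (-(r * t)) * ρ (t / ((k : ℕ) : ℝ) ^ 2)) with hFrdef
    have hg_int : ∀ k : K,
        IntegrableOn (fun t => Real.exp (-(r * t)) * ρ (t / ((k : ℕ) : ℝ) ^ 2)) (Ioi 0) := by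
      intro k
      set c : ℝ := ((k : ℕ) : ℝ) ^ 2 with hcdef
      have hcpos : 0 < c := hc0 k
      have h1 := (integrableOn_Ioi_comp_mul_left_iff
        (fun t => Real.exp (-(c * r * t)) * ρ t) 0 (inv_pos.2 hcpos)).2
        (by simpa using hint (c * r) (by positivity))
      refine h1.congr_fun (fun t ht => ?_) measurableSet_Ioi
      have : c * r * (c⁻¹ * t) = r * t := by field_simp
      beta_reduce
      rw [this, div_eq_inv_mul]
    have hFr_int : ∀ k : K, Integrable (Fr k) (volume.restrict (Ioi 0)) :=
      fun k => (hg_int k).const_mul _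
    have hFr_nonneg : ∀ (k : K) (t : ℝ), 0 ≤ Fr k t := by
      intro k t
      have := hc0 k; have := ha' k; have := hρ0 (t / ((k : ℕ) : ℝ) ^ 2)
      have := (Real.exp_pos (-(r * t))).le
      rw [hFrdef]; positivity
    have hstep1 : ∀ k : K, a k * f (((k : ℕ) : ℝ) ^ 2 * r) = ∫ t in Ioi (0 : ℝ), Fr k t := by
      intro k
      set c : ℝ := ((k : ℕ) : ℝ) ^ 2 with hcdef
      have hcpos : 0 < c := hc0 k
      have h1 := hf (c * r) (by positivity)
      have h4 : (∫ x in Ioi (0 : ℝ), Real.exp (-(c * r * x)) * ρ x)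
          = c⁻¹ * ∫ x in Ioi (0 : ℝ), Real.exp (-(r * x)) * ρ (x / c) := by
        have h2 := integral_comp_mul_left_Ioi
          (fun s => Real.exp (-(r * s)) * ρ (s / c)) 0 hcpos
        simp only [mul_zero, smul_eq_mul] at h2
        rw [← h2]
        refine setIntegral_congr_fun measurableSet_Ioi fun x _ => ?_
        rw [mul_div_cancel_left₀ _ hcpos.ne']
        ring_nf
      rw [h1, h4]
      simp only [hFrdef]
      rw [← mul_assoc, ← integral_const_mul]
      refine setIntegral_congr_fun measurableSet_Ioi fun t _ => ?_
      beta_reduce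
      rw [div_eq_mul_inv]
      ring
    have hnormFr : ∀ k : K, (∫ t in Ioi (0 : ℝ), ‖Fr k t‖) = ∫ t in Ioi (0 : ℝ), Fr k t := by
      intro k
      refine setIntegral_congr_fun measurableSet_Ioi fun t _ => ?_
      rw [Real.norm_eq_abs, abs_of_nonneg (hFr_nonneg k t)]
    have hsumFr : Summable fun k : K => ∫ t in Ioi (0 : ℝ), ‖Fr k t‖ := by
      refine Summable.of_nonneg_of_le
        (fun k => integral_nonneg fun t => norm_nonneg _)
        (fun k => ?_) (hsum.mul_right (f r))
      rw [hnormFr k]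
      have hle2 : ∀ t ∈ Ioi (0 : ℝ),
          Fr k t ≤ a k / ((k : ℕ) : ℝ) ^ 2 * (Real.exp (-(r * t)) * ρ t) := by
        intro t ht
        refine mul_le_mul_of_nonneg_left
          (mul_le_mul_of_nonneg_left (hterm_le t ht k) (Real.exp_pos _).le) ?_
        have := hc0 k; have := ha' k; positivity
      calc (∫ t in Ioi (0 : ℝ), Fr k t)
          ≤ ∫ t in Ioi (0 : ℝ), a k / ((k : ℕ) : ℝ) ^ 2 * (Real.exp (-(r * t)) * ρ t) :=
            setIntegral_mono_on (hFr_int k) ((hint r hr).const_mul _) measurableSet_Ioi hle2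
        _ = a k / ((k : ℕ) : ℝ) ^ 2 * f r := by
            rw [integral_const_mul, ← hf r hr]
    have hswap := integral_tsum_of_summable_integral_norm hFr_int hsumFr
    have hsum_eq : (∑' k : K, a k * f (((k : ℕ) : ℝ) ^ 2 * r))
        = ∫ t in Ioi (0 : ℝ), (∑' k : K, Fr k t) := by
      rw [← hswap]
      exact tsum_congr hstep1
    have htsumFr : ∀ t : ℝ, (∑' k : K, Fr k t)
        = Real.exp (-(r * t)) * (ρ t - μκ t) := by
      intro t
      have h1 : ∀ k : K, Fr k t
          = Real.exp (-(r * t)) * (a k / ((k : ℕ) : ℝ) ^ 2 * ρ (t / ((k : ℕ) : ℝ) ^ 2)) := by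
        intro k; rw [hFrdef]; ring
      rw [tsum_congr h1, tsum_mul_left]
      simp only [hμκ]
      rw [sub_sub_cancel]
    have hB_int : Integrable (fun t => ∑' k : K, Fr k t) (volume.restrict (Ioi 0)) := by
      refine Integrable.mono' (hint r hr) ?_ ?_
      · have : (fun t => ∑' k : K, Fr k t)
            = fun t => Real.exp (-(r * t)) * (ρ t - μκ t) := funext htsumFr
        rw [this]
        exact ((Real.continuous_exp.comp
          (continuous_const.mul continuous_id).neg).aestronglyMeasurable).mul
          ((hρae.aestronglyMeasurable).sub hμκ_meas)
      · filter_upwards [ae_restrict_mem measurableSet_Ioi] with t ht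
        have h0 : 0 ≤ ∑' k : K, Fr k t := tsum_nonneg fun k => hFr_nonneg k t
        have h1 : (∑' k : K, Fr k t) ≤ Real.exp (-(r * t)) * ρ t := by
          rw [htsumFr t]
          refine mul_le_mul_of_nonneg_left ?_ (Real.exp_pos _).le
          have := hμκ0 t ht; linarith
        rw [Real.norm_eq_abs, abs_of_nonneg h0]
        exact h1
    rw [hf r hr, hsum_eq, ← integral_sub (hint r hr) hB_int]
    refine setIntegral_congr_fun measurableSet_Ioi fun t _ => ?_
    rw [htsumFr t]
    ring
  -- conclude
  intro n r hr
  have heq : (fun r => f r - ∑' k : K, a k * f (((k : ℕ) : ℝ) ^ 2 * r))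
      =ᶠ[𝓝 r] (fun r => ∫ t in Ioi (0 : ℝ), Real.exp (-(r * t)) * μκ t) := by
    filter_upwards [Ioi_mem_nhds hr] with x hx
    exact hTeq x hx
  rw [heq.iteratedDeriv_eq n]
  exact hCM n r hr
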